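/- Let φ be an MTL formula in negation normal form over a finite alphabet Σ, and let A'_φ be the 1-ATA with deactivation constructed from φ. Then L(φ) = L(A'_φ), i.e., a finite timed word satisfies φ if and only if it is accepted by A'_φ. -/

import Mathlib

open scoped Classical NNReal

namespace ATAPaper

/-! ## Intervals with natural endpoints (possibly unbounded) -/

inductive NInterval where
  | cc (a b : ℕ)
  | co (a b : ℕ)
  | oc (a b : ℕ)
  | oo (a b : ℕ)
  | ci (a : ℕ)
  | oi (a : ℕ)
deriving DecidableEq

/-- Membership of a nonnegative real in an interval. -/
def NInterval.mem (v : ℝ≥0) : NInterval → Prop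
  | .cc a b => (a : ℝ≥0) ≤ v ∧ v ≤ (b : ℝ≥0)
  | .co a b => (a : ℝ≥0) ≤ v ∧ v < (b : ℝ≥0)
  | .oc a b => (a : ℝ≥0) < v ∧ v ≤ (b : ℝ≥0)
  | .oo a b => (a : ℝ≥0) < v ∧ v < (b : ℝ≥0)
  | .ci a => (a : ℝ≥0) ≤ v
  | .oi a => (a : ℝ≥0) < v

/-- The largest constant appearing in an interval. -/
def NInterval.bound : NInterval → ℕ
  | .cc a b | .co a b | .oc a b | .oo a b => max a b
  | .ci a | .oi a => a

/-! ## Transition formulas `Φ(Q)` with reset `x.φ` and deactivation `x̄.φ` -/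

inductive TF (Q : Type*) where
  | tt
  | ff
  | loc (q : Q)
  | guard (I : NInterval)
  | and (φ ψ : TF Q)
  | or (φ ψ : TF Q)
  | reset (φ : TF Q)
  | deact (φ : TF Q)

/-- A state of a 1-ATA is a location together with a clock value which is
either inactive (`none` = ⊥) or a nonnegative real.  A configuration is a
finite set of states. -/
abbrev Config (Q : Type*) := Finset (Q × Option ℝ≥0)

section BasicDefs

variable {Q A : Type*}

/-- `M ⊨_v φ`. -/
def TF.sat (M : Config Q) : TF Q → Option ℝ≥0 → Prop
  | .tt, _ => True
  | .ff, _ => False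
  | .loc q, v => (q, v) ∈ M
  | .guard I, v => v = none ∨ ∃ r, v = some r ∧ I.mem r
  | .and φ ψ, v => φ.sat M v ∧ ψ.sat M v
  | .or φ ψ, v => φ.sat M v ∨ ψ.sat M v
  | .reset φ, _ => φ.sat M (some 0)
  | .deact φ, _ => φ.sat M none

/-- `M` is a minimal model of `φ` on `v`. -/
def MinModel (M : Config Q) (v : Option ℝ≥0) (φ : TF Q) : Prop :=
  φ.sat M v ∧ ∀ M' ⊂ M, ¬ φ.sat M' v

/-- The disjuncts of a formula (assumed to be in disjunctive normal form). -/
def TF.disjuncts : TF Q → List (TF Q)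
  | .or φ ψ => φ.disjuncts ++ ψ.disjuncts
  | φ => [φ]

/-- The intervals occurring (anywhere) in a transition formula. -/
def TF.guards : TF Q → List NInterval
  | .guard I => [I]
  | .and φ ψ | .or φ ψ => φ.guards ++ ψ.guards
  | .reset φ | .deact φ => φ.guards
  | _ => []

/-! ## One-clock alternating timed automata with deactivation -/

structure OneATA (Q A : Type*) where
  init : Q
  final : Set Q
  delta : Q → A → Option (TF Q)

/-- `C` is one of the disjuncts of `δ(q,a)`. -/
def OneATA.isTarget (𝒜 : OneATA Q A) (q : Q) (a : A) (C : TF Q) : Prop :=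
  ∃ φ, 𝒜.delta q a = some φ ∧ C ∈ φ.disjuncts

/-- Time elapse on a configuration: add `d` to every active value, keep `⊥`. -/
noncomputable def Config.delay (γ : Config Q) (d : ℝ≥0) : Config Q :=
  γ.image (fun s => (s.1, s.2.map (· + d)))

/-- Discrete transition `γ →^{a,C} γ'` where the target `χ` assigns to each
state of `γ` a disjunct of the corresponding transition formula. -/
def OneATA.DStep (𝒜 : OneATA Q A) (γ : Config Q) (a : A)
    (χ : Q × Option ℝ≥0 → TF Q) (γ' : Config Q) : Prop :=
  (∀ s ∈ γ, 𝒜.isTarget s.1 a (χ s)) ∧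
  ∃ Mo : Q × Option ℝ≥0 → Config Q,
    (∀ s ∈ γ, MinModel (Mo s) s.2 (χ s)) ∧ γ' = γ.biUnion Mo

/-- Combined transition `γ →^{d,a,C} γ'`. -/
def OneATA.Step (𝒜 : OneATA Q A) (γ : Config Q) (d : ℝ≥0) (a : A)
    (χ : Q × Option ℝ≥0 → TF Q) (γ' : Config Q) : Prop :=
  𝒜.DStep (γ.delay d) a χ γ'

/-- A configuration is accepting if all its locations are accepting. -/
def OneATA.AcceptingCfg (𝒜 : OneATA Q A) (γ : Config Q) : Prop :=
  ∀ s ∈ γ, s.1 ∈ 𝒜.final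

/-- Accepting runs on (finite) timed words. -/
inductive OneATA.AccRun (𝒜 : OneATA Q A) : Config Q → List (ℝ≥0 × A) → Prop
  | nil {γ} : 𝒜.AcceptingCfg γ → 𝒜.AccRun γ []
  | cons {γ γ' : Config Q} {d : ℝ≥0} {a : A} {w : List (ℝ≥0 × A)}
      (χ : Q × Option ℝ≥0 → TF Q) :
      𝒜.Step γ d a χ γ' → 𝒜.AccRun γ' w → 𝒜.AccRun γ ((d, a) :: w)

/-- The language of a 1-ATA. -/
def OneATA.Lang (𝒜 : OneATA Q A) : Set (List (ℝ≥0 × A)) :=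
  {w | 𝒜.AccRun {(𝒜.init, some 0)} w}

/-- Reachability between configurations by timed and discrete transitions. -/
inductive OneATA.Reach (𝒜 : OneATA Q A) : Config Q → Config Q → Prop
  | refl (γ) : 𝒜.Reach γ γ
  | delay {γ γ'} (d : ℝ≥0) : 𝒜.Reach γ γ' → 𝒜.Reach γ (γ'.delay d)
  | step {γ γ' γ''} (a : A) (χ) : 𝒜.Reach γ γ' → 𝒜.DStep γ' a χ γ'' → 𝒜.Reach γ γ''

/-- The width of a configuration: the number of active states. -/
noncomputable def Config.width (γ : Config Q) : ℕ :=
  (γ.filter (fun s => s.2 ≠ none)).card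

/-- The 1-ATA has width at most `k`. -/
def OneATA.WidthBounded (𝒜 : OneATA Q A) (k : ℕ) : Prop :=
  ∀ γ, 𝒜.Reach {(𝒜.init, some 0)} γ → γ.width ≤ k

/-- All constants appearing in the automaton are at most `M`. -/
def OneATA.BoundedBy (𝒜 : OneATA Q A) (M : ℕ) : Prop :=
  ∀ q a φ, 𝒜.delta q a = some φ → ∀ I ∈ φ.guards, I.bound ≤ M

/-! ## Region equivalence and entailment on configurations -/

/-- `γ ≃_M γ'` via the bijection `h`. -/
def RegionEquivWith (M : ℕ) (γ γ' : Config Q)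
    (h : Q × Option ℝ≥0 → Q × Option ℝ≥0) : Prop :=
  Set.BijOn h ↑γ ↑γ' ∧
  (∀ s ∈ γ, (h s).1 = s.1) ∧
  (∀ s ∈ γ, ((h s).2 = none ↔ s.2 = none)) ∧
  (∀ s ∈ γ, ∀ r r', s.2 = some r → (h s).2 = some r' →
    ((r ≤ (M : ℝ≥0)) ↔ (r' ≤ (M : ℝ≥0))) ∧
    (r ≤ (M : ℝ≥0) →
      (⌊(r : ℝ)⌋ = ⌊(r' : ℝ)⌋ ∧ (Int.fract (r : ℝ) = 0 ↔ Int.fract (r' : ℝ) = 0)))) ∧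
  (∀ s₁ ∈ γ, ∀ s₂ ∈ γ, ∀ r₁ r₂ r₁' r₂',
    s₁.2 = some r₁ → s₂.2 = some r₂ → (h s₁).2 = some r₁' → (h s₂).2 = some r₂' →
    r₁ ≤ (M : ℝ≥0) → r₂ ≤ (M : ℝ≥0) →
    (Int.fract (r₁ : ℝ) ≤ Int.fract (r₂ : ℝ) ↔ Int.fract (r₁' : ℝ) ≤ Int.fract (r₂' : ℝ)))

/-- Region equivalence `γ ≃_M γ'`. -/
def RegionEquiv (M : ℕ) (γ γ' : Config Q) : Prop := ∃ h, RegionEquivWith M γ γ' h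

/-- Configuration entailment `γ ⊨_M γ'` : some subset of `γ'` is region equivalent
to `γ`. -/
def CfgEntails (M : ℕ) (γ γ' : Config Q) : Prop :=
  ∃ γ'' ⊆ γ', RegionEquiv M γ γ''

end BasicDefs


/-! ## MTL (negation normal form) -/

inductive MTL (A : Type*) where
  | atom (a : A)
  | natom (a : A)
  | conj (φ ψ : MTL A)
  | disj (φ ψ : MTL A)
  | next (I : NInterval) (φ : MTL A)
  | untl (I : NInterval) (φ ψ : MTL A)

section MTLDefs

variable {A : Type*}

/-- Accumulated time `Σ_{c=1}^{p} d_c` of the first `p` letters of a timed word. -/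
def twtime (w : List (ℝ≥0 × A)) (p : ℕ) : ℝ≥0 := ((w.take p).map Prod.fst).sum

/-- `(w, i) ⊨ φ` (positions are 0-based). -/
def MTL.holdsAt (w : List (ℝ≥0 × A)) : MTL A → ℕ → Prop
  | .atom a, i => ∃ h : i < w.length, (w.get ⟨i, h⟩).2 = a
  | .natom a, i => ∃ h : i < w.length, (w.get ⟨i, h⟩).2 ≠ a
  | .conj φ ψ, i => φ.holdsAt w i ∧ ψ.holdsAt w i
  | .disj φ ψ, i => φ.holdsAt w i ∨ ψ.holdsAt w i
  | .next I φ, i => ∃ h : i + 1 < w.length, φ.holdsAt w (i + 1) ∧ I.mem (w.get ⟨i + 1, h⟩).1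
  | .untl I φ ψ, i => ∃ k, i ≤ k ∧ k < w.length ∧ ψ.holdsAt w k ∧
      I.mem (twtime w (k + 1) - twtime w (i + 1)) ∧
      ∀ j, i ≤ j → j < k → φ.holdsAt w j

/-- The language of an MTL formula (`w ⊨ φ` iff `φ` holds at the first position). -/
def MTL.Lang (φ : MTL A) : Set (List (ℝ≥0 × A)) := {w | φ.holdsAt w 0}

/-- Pure LTL formulas: every interval is `[0, ∞)`. -/
def MTL.isPure : MTL A → Bool
  | .atom _ | .natom _ => true
  | .conj φ ψ | .disj φ ψ => φ.isPure && ψ.isPure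
  | .next I φ => decide (I = NInterval.ci 0) && φ.isPure
  | .untl I φ ψ => decide (I = NInterval.ci 0) && φ.isPure && ψ.isPure

/-- The subformulas of an MTL formula. -/
def MTL.subfs : MTL A → List (MTL A)
  | .atom a => [.atom a]
  | .natom a => [.natom a]
  | .conj φ ψ => .conj φ ψ :: (φ.subfs ++ ψ.subfs)
  | .disj φ ψ => .disj φ ψ :: (φ.subfs ++ ψ.subfs)
  | .next I φ => .next I φ :: φ.subfs
  | .untl I φ ψ => .untl I φ ψ :: (φ.subfs ++ ψ.subfs)

/-- One-sided MTL: in every Until, the left argument is a pure LTL formula. -/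
def MTL.oneSided : MTL A → Prop
  | .atom _ | .natom _ => True
  | .conj φ ψ | .disj φ ψ => φ.oneSided ∧ ψ.oneSided
  | .next _ φ => φ.oneSided
  | .untl _ φ ψ => φ.isPure = true ∧ ψ.oneSided

/-! ## The MTL-to-1-ATA construction with deactivation -/

/-- Locations of the constructed automaton: the initial location `φ_init`,
locations for formulas (in particular Until subformulas and `φ` itself), and
locations `(X_I ψ)ʳ`. -/
inductive MLoc (A : Type*) where
  | start
  | form (ψ : MTL A)
  | nextr (I : NInterval) (ψ : MTL A)

/-- Prefix `x̄.` if `ψ` is pure LTL, and nothing otherwise. -/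
def barP (ψ : MTL A) (φ : TF (MLoc A)) : TF (MLoc A) :=
  if ψ.isPure then .deact φ else φ

/-- Prefix `x̄.` if `ψ` is pure LTL, and `x.` otherwise. -/
def rhoP (ψ : MTL A) (φ : TF (MLoc A)) : TF (MLoc A) :=
  if ψ.isPure then .deact φ else .reset φ

variable [DecidableEq A]

/-- The transition formula `δ(ψ, a)` for subformulas `ψ`. -/
def dform : MTL A → A → TF (MLoc A)
  | .atom b, a => if b = a then .tt else .ff
  | .natom b, a => if b = a then .ff else .tt
  | .conj φ ψ, a => .and (barP φ (dform φ a)) (barP ψ (dform ψ a))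
  | .disj φ ψ, a => .or (barP φ (dform φ a)) (barP ψ (dform ψ a))
  | .next I ψ, _ => .reset (.loc (.nextr I ψ))
  | .untl I φ ψ, a =>
      .or (.and (rhoP ψ (dform ψ a)) (.guard I))
          (.and (rhoP φ (dform φ a)) (.loc (.form (.untl I φ ψ))))

/-- The transition function of the constructed automaton `A'_φ`. -/
def mlocDelta (φ₀ : MTL A) : MLoc A → A → Option (TF (MLoc A))
  | .start, a => some (rhoP φ₀ (dform φ₀ a))
  | .form ψ, a => some (dform ψ a)
  | .nextr I ψ, a => some (.and (.guard I) (rhoP ψ (dform ψ a)))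

/-- The 1-ATA `A'_φ` constructed from an MTL formula `φ`:
initial location `φ_init`, no accepting locations. -/
def ataOf (φ : MTL A) : OneATA (MLoc A) A :=
  { init := .start, final := ∅, delta := mlocDelta φ }

end MTLDefs

section KB
variable {A : Type*}
/-- The recursive width bound `k_ψ`. -/
def kBound : MTL A → ℕ
  | .atom _ | .natom _ => 1
  | .conj φ ψ => if (MTL.conj φ ψ).isPure then 1 else kBound φ + kBound ψ
  | .disj φ ψ => if (MTL.disj φ ψ).isPure then 1 else max (kBound φ) (kBound ψ)
  | .next I φ => if (MTL.next I φ).isPure then 1 else kBound φ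
  | .untl I φ ψ => if (MTL.untl I φ ψ).isPure then 1 else kBound ψ
end KB


/-! ## Zones (variables `x_{q,i}`), nodes and their configuration semantics -/

section ZoneDefs

variable {Q A : Type*}

/-- A (semantic) zone: a finite set of variables `x_{q,i}` together with the
set of valuations satisfying its constraints. -/
structure SemZone (Q : Type*) where
  vars : Finset (Q × ℕ)
  val : ((Q × ℕ) → ℝ≥0) → Prop

/-- `γ` satisfies the node `(Z, IA)` via the surjection `h`. -/
def NodeSatVia (Z : SemZone Q) (IA : Finset (Q × ℕ)) (γ : Config Q)
    (h : Q × ℕ → Q × Option ℝ≥0) : Prop :=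
  (∀ y ∈ Z.vars ∪ IA, (h y).1 = y.1) ∧
  (∀ y ∈ Z.vars ∪ IA, h y ∈ γ) ∧
  (∀ s ∈ γ, ∃ y ∈ Z.vars ∪ IA, h y = s) ∧
  (∀ y ∈ IA, (h y).2 = none) ∧
  ∃ ν : (Q × ℕ) → ℝ≥0, (∀ y ∈ Z.vars, (h y).2 = some (ν y)) ∧ Z.val ν

/-- `γ ∈ ⟦(Z, IA)⟧`. -/
def NodeSat (Z : SemZone Q) (IA : Finset (Q × ℕ)) (γ : Config Q) : Prop :=
  ∃ h, NodeSatVia Z IA γ h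

/-- The special empty node `(Z_∅, {})`, satisfied exactly by the empty
configuration. -/
def emptySemZone {Q : Type*} : SemZone Q := ⟨∅, fun _ => True⟩

/-- The initial node `((x_{q₀,1} = 0), ∅)`. -/
def initSemZone (𝒜 : OneATA Q A) : SemZone Q :=
  ⟨{(𝒜.init, 1)}, fun ν => ν (𝒜.init, 1) = 0⟩

/-! ### Simple clauses and the successor computation -/

/-- A clause is a conjunction of atoms of the form `true`, `false`, `q`, `I`,
`x.q`, `x̄.q`. -/
def TF.isSimpleConj : TF Q → Bool
  | .tt => true
  | .ff => true
  | .loc _ => true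
  | .guard _ => true
  | .reset (.loc _) => true
  | .deact (.loc _) => true
  | .and φ ψ => φ.isSimpleConj && ψ.isSimpleConj
  | _ => false

/-- Every transition formula of the automaton is in disjunctive normal form. -/
def OneATA.normalized (𝒜 : OneATA Q A) : Prop :=
  ∀ q a φ, 𝒜.delta q a = some φ → ∀ C ∈ φ.disjuncts, C.isSimpleConj = true

/-- The interval atoms of a clause. -/
def TF.topGuards : TF Q → List NInterval
  | .guard I => [I]
  | .and φ ψ => φ.topGuards ++ ψ.topGuards
  | _ => []

/-- The location atoms `q` of a clause. -/
def TF.atomLocs : TF Q → List Q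
  | .loc q => [q]
  | .and φ ψ => φ.atomLocs ++ ψ.atomLocs
  | _ => []

/-- The reset atoms `x.q` of a clause. -/
def TF.resetLocs : TF Q → List Q
  | .reset (.loc q) => [q]
  | .and φ ψ => φ.resetLocs ++ ψ.resetLocs
  | _ => []

/-- The deactivation atoms `x̄.q` of a clause. -/
def TF.deactLocs : TF Q → List Q
  | .deact (.loc q) => [q]
  | .and φ ψ => φ.deactLocs ++ ψ.deactLocs
  | _ => []

/-- The inactive variable set of the successor node: `x'_{q,0}` for every atom
`x̄.q`, and for every atom `q` of a clause of an inactive variable. -/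
noncomputable def succIA (Z : SemZone Q) (IA : Finset (Q × ℕ))
    (T : Q × ℕ → TF Q) : Finset (Q × ℕ) :=
  ((Z.vars ∪ IA).biUnion fun y => ((T y).deactLocs.toFinset).image fun q => (q, 0)) ∪
  (IA.biUnion fun y => ((T y).atomLocs.toFinset).image fun q => (q, 0))

/-- Number of active variables whose clause contains the atom `q`. -/
noncomputable def copyCount (Z : SemZone Q) (T : Q × ℕ → TF Q) (q : Q) : ℕ :=
  (Z.vars.filter fun y => q ∈ (T y).atomLocs).card

/-- The active variable set of the successor node: `x'_{q,1}` for resets, and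
fresh variables `x'_{q,ℓ}` with `2 ≤ ℓ` (smallest free indices) for atoms `q`
of clauses of active variables. -/
noncomputable def succVars (Z : SemZone Q) (IA : Finset (Q × ℕ))
    (T : Q × ℕ → TF Q) : Finset (Q × ℕ) :=
  (((Z.vars ∪ IA).biUnion fun y => (T y).resetLocs.toFinset).image fun q => (q, 1)) ∪
  ((Z.vars.biUnion fun y => (T y).atomLocs.toFinset).biUnion fun q =>
    (Finset.Icc 2 (copyCount Z T q + 1)).image fun i => (q, i))

/-- The successor computation on nodes:  time elapse, guard intersection,
reset/deactivation with fresh variables, and renaming (canonicalization is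
semantically transparent).  `T` assigns to every variable of the node a
disjunct of the transition formula of its location on the letter `a`.  If a
chosen disjunct is `false`, the target is discarded; if all chosen disjuncts
are `true`, the successor is the special empty node. -/
def Succ (𝒜 : OneATA Q A) (Z : SemZone Q) (IA : Finset (Q × ℕ)) (a : A)
    (T : Q × ℕ → TF Q) (Z' : SemZone Q) (IA' : Finset (Q × ℕ)) : Prop :=
  (∀ y ∈ Z.vars ∪ IA, 𝒜.isTarget y.1 a (T y)) ∧
  (∀ y ∈ Z.vars ∪ IA, T y ≠ TF.ff) ∧
  ((∀ y ∈ Z.vars ∪ IA, T y = TF.tt) → (Z' = emptySemZone ∧ IA' = ∅)) ∧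
  ((¬ ∀ y ∈ Z.vars ∪ IA, T y = TF.tt) →
    IA' = succIA Z IA T ∧
    Z'.vars = succVars Z IA T ∧
    ∃ g : (Q × ℕ) → Q → ℕ,
      (∀ y ∈ Z.vars, ∀ q ∈ (T y).atomLocs, 2 ≤ g y q ∧ g y q ≤ copyCount Z T q + 1) ∧
      (∀ y₁ ∈ Z.vars, ∀ y₂ ∈ Z.vars, ∀ q, q ∈ (T y₁).atomLocs → q ∈ (T y₂).atomLocs →
        g y₁ q = g y₂ q → y₁ = y₂) ∧
      Z'.val = fun ν' => ∃ (ν : (Q × ℕ) → ℝ≥0) (d : ℝ≥0), Z.val ν ∧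
        (∀ y ∈ Z.vars, ∀ I ∈ (T y).topGuards, I.mem (ν y + d)) ∧
        (∀ y ∈ Z.vars ∪ IA, ∀ q ∈ (T y).resetLocs, ν' (q, 1) = 0) ∧
        (∀ y ∈ Z.vars, ∀ q ∈ (T y).atomLocs, ν' (q, g y q) = ν y + d))

/-- Time elapse on a single state. -/
noncomputable def stDelay (s : Q × Option ℝ≥0) (d : ℝ≥0) : Q × Option ℝ≥0 :=
  (s.1, s.2.map (· + d))

/-- `γ →^{d,a,(C₁,…,C_m)} γ'` where the disjuncts chosen in the step correspond,
via a surjection witnessing `γ ∈ ⟦(Z,IA)⟧`, to the target tuple `T` of the node. -/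
def StepMatching (𝒜 : OneATA Q A) (Z : SemZone Q) (IA : Finset (Q × ℕ))
    (γ : Config Q) (d : ℝ≥0) (a : A) (T : Q × ℕ → TF Q) (γ' : Config Q) : Prop :=
  ∃ h χ, NodeSatVia Z IA γ h ∧
    (∀ y ∈ Z.vars ∪ IA, χ (stDelay (h y) d) = T y) ∧
    𝒜.Step γ d a χ γ'

/-- Reachability in the zone graph. -/
inductive ZReach (𝒜 : OneATA Q A) :
    SemZone Q × Finset (Q × ℕ) → SemZone Q × Finset (Q × ℕ) → Prop
  | refl (n) : ZReach 𝒜 n n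
  | step {n₁ n₂ n₃} (a : A) (T) :
      ZReach 𝒜 n₁ n₂ → Succ 𝒜 n₂.1 n₂.2 a T n₃.1 n₃.2 → ZReach 𝒜 n₁ n₃

/-- A node is accepting if the locations of all its variables are accepting. -/
def AccNode (𝒜 : OneATA Q A) (Z : SemZone Q) (IA : Finset (Q × ℕ)) : Prop :=
  ∀ y ∈ Z.vars ∪ IA, y.1 ∈ 𝒜.final

/-! ### Entailment between nodes -/

/-- Node entailment `(Z,IA) ⊨_M (Z',IA')`. -/
def NodeEntails (M : ℕ) (Z : SemZone Q) (IA : Finset (Q × ℕ))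
    (Z' : SemZone Q) (IA' : Finset (Q × ℕ)) : Prop :=
  ∀ γ', NodeSat Z' IA' γ' → ∃ γ, NodeSat Z IA γ ∧ CfgEntails M γ γ'

/-- Classical region equivalence between valuations over the variable set `V`. -/
def ValRegEquiv (M : ℕ) (V : Finset (Q × ℕ)) (u u' : (Q × ℕ) → ℝ≥0) : Prop :=
  (∀ y ∈ V, ((u y ≤ (M : ℝ≥0)) ↔ (u' y ≤ (M : ℝ≥0))) ∧
    (u y ≤ (M : ℝ≥0) →
      (⌊(u y : ℝ)⌋ = ⌊(u' y : ℝ)⌋ ∧ (Int.fract (u y : ℝ) = 0 ↔ Int.fract (u' y : ℝ) = 0)))) ∧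
  (∀ y ∈ V, ∀ z ∈ V, u y ≤ (M : ℝ≥0) → u z ≤ (M : ℝ≥0) →
    (Int.fract (u y : ℝ) ≤ Int.fract (u z : ℝ) ↔
      Int.fract (u' y : ℝ) ≤ Int.fract (u' z : ℝ)))

/-- The bounded entailment check `(Z,IA) ⊨ᵇ_M (Z',IA')`, for zones over the same
variables, using the identity correspondence of variables. -/
def BoundedEntails (M : ℕ) (Z : SemZone Q) (IA : Finset (Q × ℕ))
    (Z' : SemZone Q) (IA' : Finset (Q × ℕ)) : Prop :=
  IA ⊆ IA' ∧ ∀ u', Z'.val u' → ∃ u, Z.val u ∧ ValRegEquiv M Z.vars u u'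

/-! ### Syntactic zones -/

/-- Comparison relations in zone constraints. -/
inductive ZRel | lt | le | gt | ge

def ZRel.holds : ZRel → ℝ → ℝ → Prop
  | .lt, x, y => x < y
  | .le, x, y => x ≤ y
  | .gt, x, y => x > y
  | .ge, x, y => x ≥ y

/-- A zone constraint: `y ∼ k` or `y − x ∼ k` with `k ∈ ℤ`. -/
inductive ZConstr (Q : Type*) where
  | single (y : Q × ℕ) (r : ZRel) (k : ℤ)
  | diff (y x : Q × ℕ) (r : ZRel) (k : ℤ)

def ZConstr.holds (ν : (Q × ℕ) → ℝ≥0) : ZConstr Q → Prop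
  | .single y r k => r.holds (ν y : ℝ) (k : ℝ)
  | .diff y x r k => r.holds ((ν y : ℝ) - (ν x : ℝ)) (k : ℝ)

/-- The variables occurring in a constraint. -/
def ZConstr.varsIn : ZConstr Q → List (Q × ℕ)
  | .single y _ _ => [y]
  | .diff y x _ _ => [y, x]

/-- A (syntactic) zone: a finite set of variables and a finite conjunction of
constraints. -/
structure Zone (Q : Type*) where
  vars : Finset (Q × ℕ)
  constrs : List (ZConstr Q)

def Zone.satBy (Z : Zone Q) (ν : (Q × ℕ) → ℝ≥0) : Prop :=
  ∀ c ∈ Z.constrs, c.holds ν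

/-- Constraints only mention variables of the zone. -/
def Zone.wf (Z : Zone Q) : Prop :=
  ∀ c ∈ Z.constrs, ∀ v ∈ c.varsIn, v ∈ Z.vars

/-- The semantic zone of a syntactic zone. -/
def Zone.toSem (Z : Zone Q) : SemZone Q := ⟨Z.vars, Z.satBy⟩

/-! ### The `N'_r` sets for the entailment check -/

/-- Location preserving one-to-one mapping from `Var(Z)` to `Var(Z')`. -/
def LocPresInj (Z Z' : Zone Q) (r : Q × ℕ → Q × ℕ) : Prop :=
  Set.InjOn r ↑Z.vars ∧ (∀ y ∈ Z.vars, r y ∈ Z'.vars) ∧ ∀ y ∈ Z.vars, (r y).1 = y.1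

/-- `γ' ∈ N'_r` : `γ'` satisfies `(Z', IA')` via a surjection whose induced
valuation, transported back along `r`, is region equivalent to no valuation
satisfying `Z`. -/
def InNr (M : ℕ) (Z Z' : Zone Q) (IA' : Finset (Q × ℕ))
    (r : Q × ℕ → Q × ℕ) (γ' : Config Q) : Prop :=
  ∃ (h' : Q × ℕ → Q × Option ℝ≥0) (ν' : (Q × ℕ) → ℝ≥0),
    (∀ y ∈ Z'.vars ∪ IA', (h' y).1 = y.1) ∧
    (∀ y ∈ Z'.vars ∪ IA', h' y ∈ γ') ∧
    (∀ s ∈ γ', ∃ y ∈ Z'.vars ∪ IA', h' y = s) ∧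
    (∀ y ∈ IA', (h' y).2 = none) ∧
    (∀ y ∈ Z'.vars, (h' y).2 = some (ν' y)) ∧
    Z'.satBy ν' ∧
    ∀ ν, Z.satBy ν → ¬ ValRegEquiv M Z.vars ν (fun y => ν' (r y))

end ZoneDefs


/-! ## The zones `Z_φ` and `Z'_φ` constructed from a monotone 3-CNF formula -/

/-- The two locations `q_x` and `q_y`. -/
inductive XY | qx | qy
deriving DecidableEq

/-- The zone variables used in the reduction, for a formula with `m` clauses:
`px_j, py_j, nx_j, ny_j` (dummy clauses), `x^i_j, y^i_j` (clause literals) for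
`Z'_φ`, and `x⁺_j, y⁺_j, x⁻_j, y⁻_j` for `Z_φ`. -/
inductive MVar (m : ℕ) where
  | px (j : Fin 3)
  | py (j : Fin 3)
  | nx (j : Fin 3)
  | ny (j : Fin 3)
  | xc (i : Fin m) (j : Fin 3)
  | yc (i : Fin m) (j : Fin 3)
  | xp (j : Fin 3)
  | yp (j : Fin 3)
  | xm (j : Fin 3)
  | ym (j : Fin 3)
deriving DecidableEq

section Mono

variable {m : ℕ}

/-- The location of each variable. -/
def MVar.loc : MVar m → XY
  | .px _ | .nx _ | .xc _ _ | .xp _ | .xm _ => .qx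
  | .py _ | .ny _ | .yc _ _ | .yp _ | .ym _ => .qy

def MVar.inZ : MVar m → Prop
  | .xp _ | .yp _ | .xm _ | .ym _ => True
  | _ => False

/-- The variables of `Z_φ`. -/
def ZVars (m : ℕ) : Set (MVar m) := {y | y.inZ}

/-- The variables of `Z'_φ`. -/
def Z'Vars (m : ℕ) : Set (MVar m) := {y | ¬ y.inZ}

/-- `γ` satisfies the node `(Z, ∅)` (zone given semantically by the predicate
`P` on valuations, over the variable set `V`) via the surjection `h`. -/
def MSat (V : Set (MVar m)) (P : (MVar m → ℝ≥0) → Prop) (γ : Config XY)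
    (h : MVar m → XY × Option ℝ≥0) : Prop :=
  (∀ y ∈ V, (h y).1 = y.loc) ∧
  (∀ y ∈ V, h y ∈ γ) ∧
  (∀ s ∈ γ, ∃ y ∈ V, h y = s) ∧
  ∃ ν : MVar m → ℝ≥0, (∀ y ∈ V, (h y).2 = some (ν y)) ∧ P ν

/-- The constraints of the zone `Z_φ` (with `k` positive clauses and `m`
clauses in total). -/
def ZphiSat (m k : ℕ) (ν : MVar m → ℝ≥0) : Prop :=
  (∀ j : Fin 3, 0 ≤ (ν (.yp j) : ℝ) - ν (.xp j) ∧ (ν (.yp j) : ℝ) - ν (.xp j) ≤ 1) ∧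
  (∀ j : Fin 3, 1 < (ν (.ym j) : ℝ) - ν (.xm j) ∧ (ν (.ym j) : ℝ) - ν (.xm j) ≤ 2) ∧
  (∀ j : Fin 2, 1 ≤ (ν (.xp j.succ) : ℝ) - ν (.yp j.castSucc) ∧
      (ν (.xp j.succ) : ℝ) - ν (.yp j.castSucc) ≤ 5) ∧
  (∀ j : Fin 2, 1 ≤ (ν (.xm j.succ) : ℝ) - ν (.ym j.castSucc) ∧
      (ν (.xm j.succ) : ℝ) - ν (.ym j.castSucc) ≤ 5) ∧
  ((ν (.yp 2) : ℝ) < 14 * ((k : ℝ) + 1) - 2) ∧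
  ((ν (.xm 0) : ℝ) > 14 * ((k : ℝ) + 1) - 2) ∧
  ((ν (.ym 2) : ℝ) - ν (.xp 0) < 14 * ((m : ℝ) + 2) - 6)

/-- The constraints of the zone `Z'_φ`, for a monotone 3-CNF formula whose
`i`-th clause has literals on the propositional variables `lits i 0`,
`lits i 1`, `lits i 2`. -/
def Z'phiSat (m : ℕ) {PV : Type*} (lits : Fin m → Fin 3 → PV)
    (ν : MVar m → ℝ≥0) : Prop :=
  (∀ j : Fin 3, (ν (.px j) : ℝ) = 3 * (j : ℕ) ∧ (ν (.py j) : ℝ) = 3 * (j : ℕ)) ∧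
  (∀ j : Fin 3, (ν (.nx j) : ℝ) = 14 * ((m : ℝ) + 1) + 3 * (j : ℕ) ∧
      (ν (.ny j) : ℝ) = 14 * ((m : ℝ) + 1) + 3 * (j : ℕ) + 2) ∧
  (∀ (i : Fin m) (j : Fin 3),
      14 * ((i : ℕ) + 1 : ℝ) + 3 * (j : ℕ) ≤ (ν (.xc i j) : ℝ) ∧
      (ν (.xc i j) : ℝ) ≤ 14 * ((i : ℕ) + 1 : ℝ) + 3 * (j : ℕ) + 2 ∧
      14 * ((i : ℕ) + 1 : ℝ) + 3 * (j : ℕ) ≤ (ν (.yc i j) : ℝ) ∧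
      (ν (.yc i j) : ℝ) ≤ 14 * ((i : ℕ) + 1 : ℝ) + 3 * (j : ℕ) + 2 ∧
      (ν (.xc i j) : ℝ) ≤ (ν (.yc i j) : ℝ)) ∧
  (∀ (i i' : Fin m) (j j' : Fin 3), lits i j = lits i' j' →
      (ν (.xc i' j') : ℝ) - ν (.xc i j) = 14 * (((i' : ℕ) : ℝ) - ((i : ℕ) : ℝ)) +
        3 * (((j' : ℕ) : ℝ) - ((j : ℕ) : ℝ)) ∧
      (ν (.yc i' j') : ℝ) - ν (.yc i j) = 14 * (((i' : ℕ) : ℝ) - ((i : ℕ) : ℝ)) +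
        3 * (((j' : ℕ) : ℝ) - ((j : ℕ) : ℝ)))

/-- The (real) value of a state of a configuration. -/
noncomputable def sval (s : XY × Option ℝ≥0) : ℝ := ((s.2.getD 0 : ℝ≥0) : ℝ)

/-- The assignment `α_{γ'}` extracted from a surjection `h'` witnessing that a
configuration satisfies `(Z'_φ, ∅)`: a propositional variable is true iff the
difference `y − x` of (one of) its literal occurrences exceeds 1. -/
def alphaOf {PV : Type*} (lits : Fin m → Fin 3 → PV)
    (h' : MVar m → XY × Option ℝ≥0) (p : PV) : Prop :=
  ∃ (i : Fin m) (j : Fin 3), lits i j = p ∧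
    1 < sval (h' (.yc i j)) - sval (h' (.xc i j))

/-- The assignment `α` falsifies clause `C_i` (clauses `C_1, …, C_k` are
positive, the rest negative): all of its literals are false. -/
def Falsifies {PV : Type*} (k : ℕ) (lits : Fin m → Fin 3 → PV)
    (α : PV → Prop) (i : Fin m) : Prop :=
  if (i : ℕ) < k then ∀ j : Fin 3, ¬ α (lits i j) else ∀ j : Fin 3, α (lits i j)

/-- The monotone 3-CNF formula is satisfiable. -/
def MonoSatisfiable {PV : Type*} (k : ℕ) (lits : Fin m → Fin 3 → PV) : Prop :=
  ∃ α : PV → Prop, ∀ i : Fin m, ¬ Falsifies k lits α i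

end Mono



/-! ## Auxiliary lemmas for Statement 0 -/

section Aux

variable {Q A : Type*}

lemma TF.sat_mono {M M' : Config Q} (h : M ⊆ M') :
    ∀ {φ : TF Q} {v}, φ.sat M v → φ.sat M' v := by
  intro φ
  induction φ with
  | tt => intro v _; trivial
  | ff => intro v hs; exact hs.elim
  | loc q => intro v hs; exact h hs
  | guard I => intro v hs; exact hs
  | and φ ψ ih1 ih2 => intro v hs; exact ⟨ih1 hs.1, ih2 hs.2⟩
  | or φ ψ ih1 ih2 => intro v hs; exact hs.elim (fun h' => Or.inl (ih1 h')) (fun h' => Or.inr (ih2 h'))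
  | reset φ ih => intro v hs; exact ih hs
  | deact φ ih => intro v hs; exact ih hs

lemma TF.sat_disjuncts (φ : TF Q) (M : Config Q) (v : Option ℝ≥0) :
    φ.sat M v ↔ ∃ C ∈ φ.disjuncts, C.sat M v := by
  induction φ with
  | or φ ψ ih1 ih2 =>
    simp only [TF.sat, TF.disjuncts, List.mem_append, ih1, ih2]
    constructor
    · rintro (⟨C, hC, hs⟩ | ⟨C, hC, hs⟩)
      · exact ⟨C, Or.inl hC, hs⟩
      · exact ⟨C, Or.inr hC, hs⟩
    · rintro ⟨C, hC | hC, hs⟩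
      · exact Or.inl ⟨C, hC, hs⟩
      · exact Or.inr ⟨C, hC, hs⟩
  | tt => simp [TF.disjuncts]
  | ff => simp [TF.disjuncts]
  | loc q => simp [TF.disjuncts]
  | guard I => simp [TF.disjuncts]
  | and φ ψ _ _ => simp [TF.disjuncts]
  | reset φ _ => simp [TF.disjuncts]
  | deact φ _ => simp [TF.disjuncts]

lemma exists_minModel {φ : TF Q} {v : Option ℝ≥0} :
    ∀ {M : Config Q}, φ.sat M v → ∃ M', M' ⊆ M ∧ MinModel M' v φ := by
  intro M
  induction M using Finset.strongInduction with
  | _ M ih =>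
    intro hM
    by_cases h : ∃ M' ⊂ M, φ.sat M' v
    · obtain ⟨M', hsub, hs⟩ := h
      obtain ⟨M'', h1, h2⟩ := ih M' hsub hs
      exact ⟨M'', h1.trans hsub.subset, h2⟩
    · exact ⟨M, subset_rfl, hM, fun M' hM' hs => h ⟨M', hM', hs⟩⟩

lemma Config.delay_subset {γ' γ : Config Q} (h : γ' ⊆ γ) (d : ℝ≥0) :
    γ'.delay d ⊆ γ.delay d := Finset.image_subset_image h

lemma OneATA.accRun_mono {𝒜 : OneATA Q A} : ∀ {γ : Config Q} {w}, 𝒜.AccRun γ w →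
    ∀ {γ' : Config Q}, γ' ⊆ γ → 𝒜.AccRun γ' w := by
  intro γ w h
  induction h with
  | nil hacc => intro γ' hsub; exact .nil (fun s hs => hacc s (hsub hs))
  | @cons γ γ2 d a w χ hs hr ih =>
    intro γ' hsub
    obtain ⟨htgt, Mo, hMo, hEq⟩ := hs
    subst hEq
    refine .cons χ ⟨fun s hs' => htgt s (Config.delay_subset hsub d hs'),
      Mo, fun s hs' => hMo s (Config.delay_subset hsub d hs'), rfl⟩ (ih ?_)
    exact Finset.biUnion_subset_biUnion_of_subset_left _ (Config.delay_subset hsub d)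

lemma OneATA.accRun_cons_iff (𝒜 : OneATA Q A) (γ : Config Q) (d : ℝ≥0) (a : A)
    (w : List (ℝ≥0 × A)) :
    𝒜.AccRun γ ((d, a) :: w) ↔ ∃ χ γ', 𝒜.Step γ d a χ γ' ∧ 𝒜.AccRun γ' w := by
  constructor
  · intro h
    cases h with
    | cons χ hs hr => exact ⟨χ, _, hs, hr⟩
  · rintro ⟨χ, γ', hs, hr⟩; exact .cons χ hs hr

lemma OneATA.step_singleton_elim {𝒜 : OneATA Q A} {s : Q × Option ℝ≥0} {d : ℝ≥0} {a : A}
    {χ : Q × Option ℝ≥0 → TF Q} {γ' : Config Q} (h : 𝒜.Step {s} d a χ γ') :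
    𝒜.isTarget (stDelay s d).1 a (χ (stDelay s d)) ∧
      MinModel γ' (stDelay s d).2 (χ (stDelay s d)) := by
  obtain ⟨htgt, Mo, hMo, hEq⟩ := h
  have hsing : Config.delay {s} d = {stDelay s d} := by
    simp [Config.delay, stDelay]
  rw [hsing] at htgt hMo hEq
  rw [Finset.singleton_biUnion] at hEq
  subst hEq
  exact ⟨htgt _ (Finset.mem_singleton_self _), hMo _ (Finset.mem_singleton_self _)⟩

lemma OneATA.step_singleton_intro (𝒜 : OneATA Q A) (s : Q × Option ℝ≥0) (d : ℝ≥0) (a : A)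
    (χ : Q × Option ℝ≥0 → TF Q) (M : Config Q)
    (h1 : 𝒜.isTarget (stDelay s d).1 a (χ (stDelay s d)))
    (h2 : MinModel M (stDelay s d).2 (χ (stDelay s d))) :
    𝒜.Step {s} d a χ M := by
  have hsing : Config.delay {s} d = {stDelay s d} := by
    simp [Config.delay, stDelay]
  refine ⟨?_, fun _ => M, ?_, ?_⟩ <;> rw [hsing]
  · intro t ht; rw [Finset.mem_singleton] at ht; subst ht; exact h1
  · intro t ht; rw [Finset.mem_singleton] at ht; subst ht; exact h2
  · rw [Finset.singleton_biUnion]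

lemma OneATA.accRun_of_forall (𝒜 : OneATA Q A) :
    ∀ (w : List (ℝ≥0 × A)) (γ : Config Q), (∀ s ∈ γ, 𝒜.AccRun {s} w) → 𝒜.AccRun γ w := by
  intro w
  induction w with
  | nil =>
    intro γ h
    refine .nil (fun s hs => ?_)
    cases h s hs with
    | nil hacc => exact hacc s (Finset.mem_singleton_self s)
  | cons x w ih =>
    obtain ⟨d, a⟩ := x
    intro γ h
    have h' : ∀ s : Q × Option ℝ≥0, ∃ (χ : Q × Option ℝ≥0 → TF Q) (γs : Config Q),
        s ∈ γ → 𝒜.Step {s} d a χ γs ∧ 𝒜.AccRun γs w := by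
      intro s
      by_cases hs : s ∈ γ
      · obtain ⟨χ, γs, h1, h2⟩ := (𝒜.accRun_cons_iff _ _ _ _).1 (h s hs)
        exact ⟨χ, γs, fun _ => ⟨h1, h2⟩⟩
      · exact ⟨fun _ => .tt, ∅, fun hc => absurd hc hs⟩
    choose χf γf hf using h'
    set σ : Q × Option ℝ≥0 → Q × Option ℝ≥0 := fun t =>
      if ht : ∃ s, s ∈ γ ∧ stDelay s d = t then ht.choose else t with hσ
    have hσspec : ∀ t ∈ γ.delay d, σ t ∈ γ ∧ stDelay (σ t) d = t := by
      intro t ht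
      rw [Config.delay, Finset.mem_image] at ht
      obtain ⟨s, hs, hst⟩ := ht
      have hex : ∃ s, s ∈ γ ∧ stDelay s d = t := ⟨s, hs, hst⟩
      rw [hσ]; simp only [dif_pos hex]
      exact hex.choose_spec
    refine .cons (fun t => χf (σ t) t) ⟨?_, fun t => γf (σ t), ?_, rfl⟩ ?_
    · intro t ht
      obtain ⟨hmem, heq⟩ := hσspec t ht
      have := (OneATA.step_singleton_elim (hf (σ t) hmem).1).1
      rwa [heq] at this
    · intro t ht
      obtain ⟨hmem, heq⟩ := hσspec t ht
      have := (OneATA.step_singleton_elim (hf (σ t) hmem).1).2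
      rwa [heq] at this
    · apply ih
      intro u hu
      rw [Finset.mem_biUnion] at hu
      obtain ⟨t, ht, hu⟩ := hu
      obtain ⟨hmem, _⟩ := hσspec t ht
      exact OneATA.accRun_mono (hf (σ t) hmem).2 (Finset.singleton_subset_iff.2 hu)

lemma OneATA.accRun_iff_forall (𝒜 : OneATA Q A) (γ : Config Q) (w : List (ℝ≥0 × A)) :
    𝒜.AccRun γ w ↔ ∀ s ∈ γ, 𝒜.AccRun {s} w :=
  ⟨fun h s hs => OneATA.accRun_mono h (Finset.singleton_subset_iff.2 hs),
   fun h => 𝒜.accRun_of_forall w γ h⟩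

lemma OneATA.singleton_step_iff (𝒜 : OneATA Q A) (q : Q) (v : Option ℝ≥0) (d : ℝ≥0) (a : A)
    (Δ : TF Q) (hΔ : 𝒜.delta q a = some Δ) (w : List (ℝ≥0 × A)) :
    𝒜.AccRun {(q, v)} ((d, a) :: w) ↔
      ∃ M : Config Q, Δ.sat M (v.map (· + d)) ∧ ∀ s ∈ M, 𝒜.AccRun {s} w := by
  constructor
  · intro h
    obtain ⟨χ, γ', hstep, hrun⟩ := (𝒜.accRun_cons_iff _ _ _ _).1 h
    obtain ⟨htgt, hmin⟩ := OneATA.step_singleton_elim hstep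
    obtain ⟨Δ', hΔ', hC⟩ := htgt
    rw [show stDelay (q, v) d = (q, v.map (· + d)) from rfl] at hΔ' hC hmin
    rw [hΔ] at hΔ'
    obtain rfl : Δ = Δ' := Option.some.inj hΔ'
    refine ⟨γ', ?_, fun s hs => OneATA.accRun_mono hrun (Finset.singleton_subset_iff.2 hs)⟩
    exact (Δ.sat_disjuncts _ _).2 ⟨_, hC, hmin.1⟩
  · rintro ⟨M, hsat, hall⟩
    obtain ⟨C, hC, hCs⟩ := (Δ.sat_disjuncts _ _).1 hsat
    obtain ⟨M', hM'sub, hM'min⟩ := exists_minModel hCs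
    refine (𝒜.accRun_cons_iff _ _ _ _).2 ⟨fun _ => C, M', ?_, ?_⟩
    · exact OneATA.step_singleton_intro 𝒜 _ d a _ M' ⟨Δ, hΔ, hC⟩ hM'min
    · exact 𝒜.accRun_of_forall w M' (fun s hs => hall s (hM'sub hs))

end Aux
section Aux2

variable {A : Type*}

lemma twtime_zero (w : List (ℝ≥0 × A)) : twtime w 0 = 0 := rfl

lemma twtime_nil (k : ℕ) : twtime ([] : List (ℝ≥0 × A)) k = 0 := by
  simp [twtime]

lemma twtime_cons (x : ℝ≥0 × A) (w : List (ℝ≥0 × A)) (k : ℕ) :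
    twtime (x :: w) (k + 1) = x.1 + twtime w k := by
  simp [twtime]

lemma holdsAt_nil (ψ : MTL A) (i : ℕ) : ¬ MTL.holdsAt [] ψ i := by
  induction ψ generalizing i with
  | atom a => rintro ⟨h, -⟩; simp at h
  | natom a => rintro ⟨h, -⟩; simp at h
  | conj φ ψ ih1 ih2 => rintro ⟨h1, -⟩; exact ih1 i h1
  | disj φ ψ ih1 ih2 => rintro (h1 | h2); exacts [ih1 i h1, ih2 i h2]
  | next I ψ ih => rintro ⟨h, -⟩; simp at h
  | untl I φ ψ ih1 ih2 => rintro ⟨k, -, h, -⟩; simp at h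

lemma holdsAt_cons_succ (ψ : MTL A) (x : ℝ≥0 × A) (w : List (ℝ≥0 × A)) (i : ℕ) :
    MTL.holdsAt (x :: w) ψ (i + 1) ↔ MTL.holdsAt w ψ i := by
  induction ψ generalizing i with
  | atom a =>
    constructor
    · rintro ⟨h, hg⟩
      exact ⟨by simpa using h, by simpa using hg⟩
    · rintro ⟨h, hg⟩
      exact ⟨by simpa using Nat.succ_lt_succ h, by simpa using hg⟩
  | natom a =>
    constructor
    · rintro ⟨h, hg⟩
      exact ⟨by simpa using h, by simpa using hg⟩
    · rintro ⟨h, hg⟩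
      exact ⟨by simpa using Nat.succ_lt_succ h, by simpa using hg⟩
  | conj φ ψ ih1 ih2 =>
    exact and_congr (ih1 i) (ih2 i)
  | disj φ ψ ih1 ih2 =>
    exact or_congr (ih1 i) (ih2 i)
  | next I ψ ih =>
    constructor
    · rintro ⟨h, h1, hg⟩
      exact ⟨by simpa using h, (ih (i+1)).1 h1, by simpa using hg⟩
    · rintro ⟨h, h1, hg⟩
      exact ⟨by simpa using Nat.succ_lt_succ h, (ih (i+1)).2 h1, by simpa using hg⟩
  | untl I φ ψ ih1 ih2 =>
    constructor
    · rintro ⟨k, hik, hkl, h2, hI, hall⟩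
      obtain ⟨k', rfl⟩ : ∃ k', k = k' + 1 := ⟨k - 1, by omega⟩
      refine ⟨k', by omega, by simpa using hkl, (ih2 k').1 h2, ?_, ?_⟩
      · rwa [twtime_cons, twtime_cons, add_tsub_add_eq_tsub_left] at hI
      · intro j hij hjk
        exact (ih1 j).1 (hall (j + 1) (by omega) (by omega))
    · rintro ⟨k, hik, hkl, h2, hI, hall⟩
      refine ⟨k + 1, by omega, by simpa using Nat.succ_lt_succ hkl, (ih2 k).2 h2, ?_, ?_⟩
      · rwa [twtime_cons, twtime_cons, add_tsub_add_eq_tsub_left]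
      · intro j hij hjk
        obtain ⟨j', rfl⟩ : ∃ j', j = j' + 1 := ⟨j - 1, by omega⟩
        exact (ih1 j').2 (hall j' (by omega) (by omega))

lemma holdsAt_fst_irrel_zero (ψ : MTL A) (d d' : ℝ≥0) (b : A) (t : List (ℝ≥0 × A)) :
    MTL.holdsAt ((d, b) :: t) ψ 0 ↔ MTL.holdsAt ((d', b) :: t) ψ 0 := by
  induction ψ with
  | atom a =>
    constructor <;> (rintro ⟨h, hg⟩; exact ⟨by simpa using h, by simpa using hg⟩)
  | natom a =>
    constructor <;> (rintro ⟨h, hg⟩; exact ⟨by simpa using h, by simpa using hg⟩)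
  | conj φ ψ ih1 ih2 => exact and_congr ih1 ih2
  | disj φ ψ ih1 ih2 => exact or_congr ih1 ih2
  | next I ψ _ =>
    constructor <;>
    · rintro ⟨h, h1, hg⟩
      refine ⟨by simpa using h, ?_, by simpa using hg⟩
      rw [holdsAt_cons_succ] at h1 ⊢
      exact h1
  | untl I φ ψ ih1 ih2 =>
    have hsub : ∀ (χ : MTL A), (MTL.holdsAt ((d, b) :: t) χ 0 ↔ MTL.holdsAt ((d', b) :: t) χ 0) →
        ∀ k, MTL.holdsAt ((d, b) :: t) χ k ↔ MTL.holdsAt ((d', b) :: t) χ k := by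
      intro χ h0 k
      cases k with
      | zero => exact h0
      | succ k => exact (holdsAt_cons_succ χ _ t k).trans (holdsAt_cons_succ χ _ t k).symm
    have htw : ∀ (e : ℝ≥0) (k : ℕ),
        twtime ((e, b) :: t) (k + 1) - twtime ((e, b) :: t) 1 = twtime t k := by
      intro e k
      rw [show (1 : ℕ) = 0 + 1 from rfl, twtime_cons, twtime_cons,
        add_tsub_add_eq_tsub_left, twtime_zero, tsub_zero]
    constructor
    · rintro ⟨k, h0, hkl, h2, hI, hall⟩
      refine ⟨k, h0, by simpa using hkl, (hsub ψ ih2 k).1 h2, ?_, fun j h0j hjk => (hsub φ ih1 j).1 (hall j h0j hjk)⟩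
      rwa [htw] at hI ⊢
    · rintro ⟨k, h0, hkl, h2, hI, hall⟩
      refine ⟨k, h0, by simpa using hkl, (hsub ψ ih2 k).2 h2, ?_, fun j h0j hjk => (hsub φ ih1 j).2 (hall j h0j hjk)⟩
      rwa [htw] at hI ⊢
end Aux2

section Aux2b
variable {A : Type*}

lemma holdsAt_fst_irrel (ψ : MTL A) (d d' : ℝ≥0) (b : A) (t : List (ℝ≥0 × A)) (k : ℕ) :
    MTL.holdsAt ((d, b) :: t) ψ k ↔ MTL.holdsAt ((d', b) :: t) ψ k := by
  cases k with
  | zero => exact holdsAt_fst_irrel_zero ψ d d' b t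
  | succ k => exact (holdsAt_cons_succ ψ _ t k).trans (holdsAt_cons_succ ψ _ t k).symm

end Aux2b
section Aux3

variable {A : Type*}

/-- Guard satisfaction on an optional clock value. -/
def GOk (I : NInterval) (v : Option ℝ≥0) : Prop :=
  v = none ∨ ∃ r, v = some r ∧ I.mem r

/-- Add a delay to an optional clock value. -/
def oadd' (v : Option ℝ≥0) (d : ℝ≥0) : Option ℝ≥0 := v.map (· + d)

lemma oadd_some (u : ℝ≥0) (d : ℝ≥0) : oadd' (some u) d = some (u + d) := rfl

lemma oadd_zero (v : Option ℝ≥0) : oadd' v 0 = v := by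
  cases v
  · rfl
  · rw [oadd_some, add_zero]

lemma oadd_oadd (v : Option ℝ≥0) (d e : ℝ≥0) : oadd' (oadd' v d) e = oadd' v (d + e) := by
  cases v
  · rfl
  · rw [oadd_some, oadd_some, oadd_some, add_assoc]

lemma GOk_none (I : NInterval) : GOk I none := Or.inl rfl

lemma GOk_some (I : NInterval) (u : ℝ≥0) : GOk I (some u) ↔ I.mem u := by
  constructor
  · rintro (h | ⟨r, hr, hm⟩)
    · exact absurd h (Option.some_ne_none u)
    · obtain rfl := Option.some.inj hr
      exact hm
  · intro h
    exact Or.inr ⟨u, rfl, h⟩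

/-- The clock value after a reset/deactivation prefix `ρ_ψ`. -/
def rzv (ψ : MTL A) : Option ℝ≥0 := if ψ.isPure then none else some 0

/-- The clock value after a (possible) deactivation prefix for `ψ` at value `r`. -/
def bzv (ψ : MTL A) (r : Option ℝ≥0) : Option ℝ≥0 := if ψ.isPure then none else r

lemma bzv_none (ψ : MTL A) : bzv ψ none = none := by
  simp only [bzv, ite_self]

/-- Suffix semantics with an explicit until-clock value. -/
def AHolds : MTL A → Option ℝ≥0 → List (ℝ≥0 × A) → Prop
  | .atom b, _, s => MTL.holdsAt s (.atom b) 0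
  | .natom b, _, s => MTL.holdsAt s (.natom b) 0
  | .conj φ ψ, r, s => AHolds φ (bzv φ r) s ∧ AHolds ψ (bzv ψ r) s
  | .disj φ ψ, r, s => AHolds φ (bzv φ r) s ∨ AHolds ψ (bzv ψ r) s
  | .next I ψ, _, s => MTL.holdsAt s (.next I ψ) 0
  | .untl I φ ψ, r, s => ∃ k, k < s.length ∧ MTL.holdsAt s ψ k ∧
      GOk I (oadd' r (twtime s (k + 1) - twtime s 1)) ∧
      ∀ j, j < k → MTL.holdsAt s φ j

lemma aholds_spec (ψ : MTL A) (s : List (ℝ≥0 × A)) :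
    (ψ.isPure = true → (AHolds ψ none s ↔ MTL.holdsAt s ψ 0)) ∧
    (AHolds ψ (some 0) s ↔ MTL.holdsAt s ψ 0) := by
  induction ψ with
  | atom b => exact ⟨fun _ => Iff.rfl, Iff.rfl⟩
  | natom b => exact ⟨fun _ => Iff.rfl, Iff.rfl⟩
  | next I ψ ih => exact ⟨fun _ => Iff.rfl, Iff.rfl⟩
  | conj φ ψ ih1 ih2 =>
    constructor
    · intro hp
      rw [MTL.isPure, Bool.and_eq_true] at hp
      show AHolds φ (bzv φ none) s ∧ AHolds ψ (bzv ψ none) s ↔ _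
      rw [bzv_none, bzv_none, ih1.1 hp.1, ih2.1 hp.2]
      rfl
    · show AHolds φ (bzv φ (some 0)) s ∧ AHolds ψ (bzv ψ (some 0)) s ↔ _
      have h1 : AHolds φ (bzv φ (some 0)) s ↔ MTL.holdsAt s φ 0 := by
        by_cases hp : φ.isPure <;> simp only [bzv, hp, if_true, if_false, ite_true, ite_false]
        · exact ih1.1 hp
        · exact ih1.2
      have h2 : AHolds ψ (bzv ψ (some 0)) s ↔ MTL.holdsAt s ψ 0 := by
        by_cases hp : ψ.isPure <;> simp only [bzv, hp, if_true, if_false, ite_true, ite_false]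
        · exact ih2.1 hp
        · exact ih2.2
      rw [h1, h2]; rfl
  | disj φ ψ ih1 ih2 =>
    constructor
    · intro hp
      rw [MTL.isPure, Bool.and_eq_true] at hp
      show AHolds φ (bzv φ none) s ∨ AHolds ψ (bzv ψ none) s ↔ _
      rw [bzv_none, bzv_none, ih1.1 hp.1, ih2.1 hp.2]
      rfl
    · show AHolds φ (bzv φ (some 0)) s ∨ AHolds ψ (bzv ψ (some 0)) s ↔ _
      have h1 : AHolds φ (bzv φ (some 0)) s ↔ MTL.holdsAt s φ 0 := by
        by_cases hp : φ.isPure <;> simp only [bzv, hp, if_true, if_false, ite_true, ite_false]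
        · exact ih1.1 hp
        · exact ih1.2
      have h2 : AHolds ψ (bzv ψ (some 0)) s ↔ MTL.holdsAt s ψ 0 := by
        by_cases hp : ψ.isPure <;> simp only [bzv, hp, if_true, if_false, ite_true, ite_false]
        · exact ih2.1 hp
        · exact ih2.2
      rw [h1, h2]; rfl
  | untl I φ ψ ih1 ih2 =>
    constructor
    · intro hp
      rw [MTL.isPure, Bool.and_eq_true, Bool.and_eq_true] at hp
      obtain ⟨⟨hI, _⟩, _⟩ := hp
      rw [decide_eq_true_eq] at hI
      subst hI
      show (∃ k, k < s.length ∧ _) ↔ _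
      constructor
      · rintro ⟨k, hk, h2, -, hall⟩
        exact ⟨k, Nat.zero_le k, hk, h2, by simp [NInterval.mem], fun j _ hj => hall j hj⟩
      · rintro ⟨k, -, hk, h2, -, hall⟩
        exact ⟨k, hk, h2, GOk_none _, fun j hj => hall j (Nat.zero_le j) hj⟩
    · show (∃ k, k < s.length ∧ _) ↔ _
      constructor
      · rintro ⟨k, hk, h2, hG, hall⟩
        rw [oadd_some, zero_add, GOk_some] at hG
        exact ⟨k, Nat.zero_le k, hk, h2, hG, fun j _ hj => hall j hj⟩
      · rintro ⟨k, -, hk, h2, hG, hall⟩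
        refine ⟨k, hk, h2, ?_, fun j hj => hall j (Nat.zero_le j) hj⟩
        rw [oadd_some, zero_add, GOk_some]
        exact hG

lemma aholds_rzv (ψ : MTL A) (s : List (ℝ≥0 × A)) :
    AHolds ψ (rzv ψ) s ↔ MTL.holdsAt s ψ 0 := by
  by_cases hp : ψ.isPure <;> simp only [rzv, hp, ite_true, ite_false]
  · exact (aholds_spec ψ s).1 hp
  · exact (aholds_spec ψ s).2

end Aux3
section Aux4

variable {A : Type*} [DecidableEq A]

/-- Existence of a model of `δ(ψ,a)` at value `r` all of whose states accept `rest`. -/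
def EvalP (φ₀ : MTL A) (ψ : MTL A) (r : Option ℝ≥0) (a : A) (rest : List (ℝ≥0 × A)) : Prop :=
  ∃ M : Config (MLoc A), (dform ψ a).sat M r ∧ ∀ s ∈ M, (ataOf φ₀).AccRun {s} rest

lemma barP_sat (χ : MTL A) (f : TF (MLoc A)) (M : Config (MLoc A)) (r : Option ℝ≥0) :
    (barP χ f).sat M r ↔ f.sat M (bzv χ r) := by
  by_cases hp : χ.isPure <;> simp only [barP, bzv, hp, ite_true, ite_false] <;> rfl

lemma rhoP_sat (χ : MTL A) (f : TF (MLoc A)) (M : Config (MLoc A)) (r : Option ℝ≥0) :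
    (rhoP χ f).sat M r ↔ f.sat M (rzv χ) := by
  by_cases hp : χ.isPure <;> simp only [rhoP, rzv, hp, ite_true, ite_false] <;> rfl

lemma evalP_atom (φ₀ : MTL A) (b a : A) (r : Option ℝ≥0) (rest : List (ℝ≥0 × A)) :
    EvalP φ₀ (.atom b) r a rest ↔ b = a := by
  constructor
  · rintro ⟨M, hsat, -⟩
    by_contra hne
    rw [show dform (MTL.atom b) a = if b = a then TF.tt else TF.ff from rfl, if_neg hne] at hsat
    exact hsat
  · rintro rfl
    exact ⟨∅, by rw [show dform (MTL.atom b) b = if b = b then TF.tt else TF.ff from rfl, if_pos rfl]; trivial,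
      fun s hs => absurd hs (Finset.notMem_empty s)⟩

lemma evalP_natom (φ₀ : MTL A) (b a : A) (r : Option ℝ≥0) (rest : List (ℝ≥0 × A)) :
    EvalP φ₀ (.natom b) r a rest ↔ b ≠ a := by
  constructor
  · rintro ⟨M, hsat, -⟩
    intro heq
    rw [show dform (MTL.natom b) a = if b = a then TF.ff else TF.tt from rfl, if_pos heq] at hsat
    exact hsat
  · intro hne
    exact ⟨∅, by rw [show dform (MTL.natom b) a = if b = a then TF.ff else TF.tt from rfl, if_neg hne]; trivial,
      fun s hs => absurd hs (Finset.notMem_empty s)⟩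

lemma evalP_conj (φ₀ : MTL A) (φ ψ : MTL A) (r : Option ℝ≥0) (a : A) (rest : List (ℝ≥0 × A)) :
    EvalP φ₀ (.conj φ ψ) r a rest ↔ EvalP φ₀ φ (bzv φ r) a rest ∧ EvalP φ₀ ψ (bzv ψ r) a rest := by
  constructor
  · rintro ⟨M, hsat, hall⟩
    obtain ⟨h1, h2⟩ := hsat
    rw [barP_sat] at h1 h2
    exact ⟨⟨M, h1, hall⟩, ⟨M, h2, hall⟩⟩
  · rintro ⟨⟨M1, h1, hall1⟩, ⟨M2, h2, hall2⟩⟩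
    refine ⟨M1 ∪ M2, ⟨?_, ?_⟩, ?_⟩
    · rw [barP_sat]; exact TF.sat_mono Finset.subset_union_left h1
    · rw [barP_sat]; exact TF.sat_mono Finset.subset_union_right h2
    · intro s hs
      rcases Finset.mem_union.1 hs with hs | hs
      exacts [hall1 s hs, hall2 s hs]

lemma evalP_disj (φ₀ : MTL A) (φ ψ : MTL A) (r : Option ℝ≥0) (a : A) (rest : List (ℝ≥0 × A)) :
    EvalP φ₀ (.disj φ ψ) r a rest ↔ EvalP φ₀ φ (bzv φ r) a rest ∨ EvalP φ₀ ψ (bzv ψ r) a rest := by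
  constructor
  · rintro ⟨M, hsat, hall⟩
    rcases hsat with h1 | h2
    · rw [barP_sat] at h1; exact Or.inl ⟨M, h1, hall⟩
    · rw [barP_sat] at h2; exact Or.inr ⟨M, h2, hall⟩
  · rintro (⟨M, h1, hall⟩ | ⟨M, h2, hall⟩)
    · exact ⟨M, Or.inl ((barP_sat _ _ _ _).2 h1), hall⟩
    · exact ⟨M, Or.inr ((barP_sat _ _ _ _).2 h2), hall⟩

lemma evalP_next (φ₀ : MTL A) (I : NInterval) (ψ : MTL A) (r : Option ℝ≥0) (a : A)
    (rest : List (ℝ≥0 × A)) :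
    EvalP φ₀ (.next I ψ) r a rest ↔ (ataOf φ₀).AccRun {(MLoc.nextr I ψ, some 0)} rest := by
  constructor
  · rintro ⟨M, hsat, hall⟩
    exact hall _ hsat
  · intro h
    exact ⟨{(MLoc.nextr I ψ, some 0)}, Finset.mem_singleton_self _, by
      rintro s hs
      rw [Finset.mem_singleton] at hs
      subst hs
      exact h⟩

lemma evalP_untl (φ₀ : MTL A) (I : NInterval) (φ ψ₂ : MTL A) (r : Option ℝ≥0) (a : A)
    (rest : List (ℝ≥0 × A)) :
    EvalP φ₀ (.untl I φ ψ₂) r a rest ↔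
      (GOk I r ∧ EvalP φ₀ ψ₂ (rzv ψ₂) a rest) ∨
      (EvalP φ₀ φ (rzv φ) a rest ∧
        (ataOf φ₀).AccRun {(MLoc.form (.untl I φ ψ₂), r)} rest) := by
  constructor
  · rintro ⟨M, hsat, hall⟩
    rcases hsat with ⟨h2, hG⟩ | ⟨h1, hmem⟩
    · rw [rhoP_sat] at h2
      exact Or.inl ⟨hG, M, h2, hall⟩
    · rw [rhoP_sat] at h1
      exact Or.inr ⟨⟨M, h1, hall⟩, hall _ hmem⟩
  · rintro (⟨hG, M, h2, hall⟩ | ⟨⟨M, h1, hall⟩, hloop⟩)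
    · exact ⟨M, Or.inl ⟨(rhoP_sat _ _ _ _).2 h2, hG⟩, hall⟩
    · refine ⟨M ∪ {(MLoc.form (.untl I φ ψ₂), r)},
        Or.inr ⟨(rhoP_sat _ _ _ _).2 (TF.sat_mono Finset.subset_union_left h1),
          Finset.mem_union_right _ (Finset.mem_singleton_self _)⟩, ?_⟩
      intro s hs
      rcases Finset.mem_union.1 hs with hs | hs
      · exact hall s hs
      · rw [Finset.mem_singleton] at hs
        subst hs
        exact hloop

lemma not_accRun_nil (φ₀ : MTL A) (s : MLoc A × Option ℝ≥0) :
    ¬ (ataOf φ₀).AccRun {s} [] := by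
  intro h
  cases h with
  | nil hacc => exact hacc s (Finset.mem_singleton_self s)

lemma form_step (φ₀ : MTL A) (ψ : MTL A) (v : Option ℝ≥0) (d : ℝ≥0) (a : A)
    (rest : List (ℝ≥0 × A)) :
    (ataOf φ₀).AccRun {(MLoc.form ψ, v)} ((d, a) :: rest) ↔ EvalP φ₀ ψ (oadd' v d) a rest :=
  OneATA.singleton_step_iff (ataOf φ₀) (MLoc.form ψ) v d a (dform ψ a) rfl rest

lemma nextr_step (φ₀ : MTL A) (I : NInterval) (ψ : MTL A) (d : ℝ≥0) (a : A)
    (rest : List (ℝ≥0 × A)) :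
    (ataOf φ₀).AccRun {(MLoc.nextr I ψ, some 0)} ((d, a) :: rest) ↔
      I.mem d ∧ EvalP φ₀ ψ (rzv ψ) a rest := by
  rw [OneATA.singleton_step_iff (ataOf φ₀) (MLoc.nextr I ψ) (some 0) d a
    (.and (.guard I) (rhoP ψ (dform ψ a))) rfl rest]
  constructor
  · rintro ⟨M, ⟨hG, hsat⟩, hall⟩
    rw [rhoP_sat] at hsat
    have : GOk I (some (0 + d)) := hG
    rw [zero_add, GOk_some] at this
    exact ⟨this, M, hsat, hall⟩
  · rintro ⟨hI, M, hsat, hall⟩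
    refine ⟨M, ⟨?_, (rhoP_sat _ _ _ _).2 hsat⟩, hall⟩
    show GOk I (some (0 + d))
    rw [zero_add, GOk_some]
    exact hI

lemma start_step (φ₀ : MTL A) (d : ℝ≥0) (a : A) (rest : List (ℝ≥0 × A)) :
    (ataOf φ₀).AccRun {(MLoc.start, some 0)} ((d, a) :: rest) ↔
      EvalP φ₀ φ₀ (rzv φ₀) a rest := by
  rw [OneATA.singleton_step_iff (ataOf φ₀) MLoc.start (some 0) d a
    (rhoP φ₀ (dform φ₀ a)) rfl rest]
  constructor
  · rintro ⟨M, hsat, hall⟩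
    rw [rhoP_sat] at hsat
    exact ⟨M, hsat, hall⟩
  · rintro ⟨M, hsat, hall⟩
    exact ⟨M, (rhoP_sat _ _ _ _).2 hsat, hall⟩

end Aux4
section Aux5

variable {A : Type*} [DecidableEq A]

lemma tws (a : A) (rest : List (ℝ≥0 × A)) (k : ℕ) :
    twtime (((0 : ℝ≥0), a) :: rest) (k + 1) - twtime (((0 : ℝ≥0), a) :: rest) 1
      = twtime rest k := by
  rw [show (1 : ℕ) = 0 + 1 from rfl, twtime_cons, twtime_cons,
    add_tsub_add_eq_tsub_left, twtime_zero, tsub_zero]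

lemma AHolds_untl_iff (I : NInterval) (φ ψ : MTL A) (r : Option ℝ≥0)
    (s : List (ℝ≥0 × A)) :
    AHolds (.untl I φ ψ) r s ↔ ∃ k, k < s.length ∧ MTL.holdsAt s ψ k ∧
      GOk I (oadd' r (twtime s (k + 1) - twtime s 1)) ∧
      ∀ j, j < k → MTL.holdsAt s φ j := Iff.rfl

lemma key (φ₀ : MTL A) : ∀ (n : ℕ) (rest : List (ℝ≥0 × A)), rest.length < n →
    ∀ (ψ : MTL A) (r : Option ℝ≥0) (a : A),
    EvalP φ₀ ψ r a rest ↔ AHolds ψ r ((0, a) :: rest) := by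
  intro n
  induction n with
  | zero => exact fun rest h => absurd h (Nat.not_lt_zero _)
  | succ n ih =>
    intro rest hlen ψ
    induction ψ with
    | atom b =>
      intro r a
      rw [evalP_atom]
      constructor
      · rintro rfl
        exact ⟨by simp, rfl⟩
      · rintro ⟨h, hg⟩
        exact hg.symm
    | natom b =>
      intro r a
      rw [evalP_natom]
      constructor
      · intro hne
        exact ⟨by simp, fun h => hne h.symm⟩
      · rintro ⟨h, hg⟩
        exact fun hba => hg hba.symm
    | conj φ ψ ihφ ihψ =>
      intro r a
      rw [evalP_conj]
      exact and_congr (ihφ _ _) (ihψ _ _)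
    | disj φ ψ ihφ ihψ =>
      intro r a
      rw [evalP_disj]
      exact or_congr (ihφ _ _) (ihψ _ _)
    | next I ψ ihψ =>
      intro r a
      rw [evalP_next]
      cases rest with
      | nil =>
        constructor
        · intro h
          exact absurd h (not_accRun_nil φ₀ _)
        · rintro ⟨h, -⟩
          simp at h
      | cons x rest' =>
        obtain ⟨d', a'⟩ := x
        have hlen' : rest'.length < n := by
          simp only [List.length_cons] at hlen
          omega
        rw [nextr_step, ih rest' hlen' ψ (rzv ψ) a', aholds_rzv]
        constructor
        · rintro ⟨hI, hψ⟩
          refine ⟨by simp, ?_, by simpa using hI⟩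
          rw [holdsAt_cons_succ]
          rwa [holdsAt_fst_irrel ψ 0 d' a' rest' 0] at hψ
        · rintro ⟨h, h1, hg⟩
          refine ⟨by simpa using hg, ?_⟩
          rw [holdsAt_cons_succ] at h1
          rwa [holdsAt_fst_irrel ψ d' 0 a' rest' 0] at h1
    | untl I φ ψ₂ ihφ ihψ₂ =>
      intro r a
      rw [evalP_untl, AHolds_untl_iff]
      have hψ₂ : EvalP φ₀ ψ₂ (rzv ψ₂) a rest ↔ MTL.holdsAt ((0, a) :: rest) ψ₂ 0 :=
        (ihψ₂ _ _).trans (aholds_rzv ψ₂ _)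
      have hφ : EvalP φ₀ φ (rzv φ) a rest ↔ MTL.holdsAt ((0, a) :: rest) φ 0 :=
        (ihφ _ _).trans (aholds_rzv φ _)
      rw [hψ₂, hφ]
      cases rest with
      | nil =>
        constructor
        · rintro (⟨hG, h2⟩ | ⟨-, h⟩)
          · refine ⟨0, by simp, h2, ?_, fun j hj => absurd hj (Nat.not_lt_zero j)⟩
            rw [tws, twtime_zero, oadd_zero]
            exact hG
          · exact absurd h (not_accRun_nil φ₀ _)
        · rintro ⟨k, hk, h2, hG, -⟩
          obtain rfl : k = 0 := by simpa using hk
          rw [tws, twtime_zero, oadd_zero] at hG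
          exact Or.inl ⟨hG, h2⟩
      | cons x rest' =>
        obtain ⟨d', a'⟩ := x
        have hlen' : rest'.length < n := by
          simp only [List.length_cons] at hlen
          omega
        rw [form_step, ih rest' hlen' (.untl I φ ψ₂) (oadd' r d') a', AHolds_untl_iff]
        have f1 : ∀ (χ : MTL A) (k : ℕ), MTL.holdsAt ((0, a') :: rest') χ k ↔
            MTL.holdsAt ((0, a) :: (d', a') :: rest') χ (k + 1) := by
          intro χ k
          rw [holdsAt_cons_succ, holdsAt_fst_irrel χ 0 d' a' rest' k]
        have f2 : ∀ k' : ℕ,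
            oadd' (oadd' r d') (twtime ((0, a') :: rest') (k' + 1) - twtime ((0, a') :: rest') 1)
              = oadd' r (twtime ((0, a) :: (d', a') :: rest') (k' + 1 + 1)
                  - twtime ((0, a) :: (d', a') :: rest') 1) := by
          intro k'
          rw [tws, oadd_oadd, tws, twtime_cons]
        constructor
        · rintro (⟨hG, h2⟩ | ⟨h1, k', hk', h2', hG', hall'⟩)
          · refine ⟨0, by simp, h2, ?_, fun j hj => absurd hj (Nat.not_lt_zero j)⟩
            rw [tws, twtime_zero, oadd_zero]
            exact hG
          · refine ⟨k' + 1, ?_, (f1 ψ₂ k').1 h2', ?_, ?_⟩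
            · simp only [List.length_cons] at hk' ⊢
              omega
            · rw [← f2 k']
              exact hG'
            · intro j hj
              cases j with
              | zero => exact h1
              | succ j' => exact (f1 φ j').1 (hall' j' (by omega))
        · rintro ⟨k, hk, h2, hG, hall⟩
          cases k with
          | zero =>
            rw [tws, twtime_zero, oadd_zero] at hG
            exact Or.inl ⟨hG, h2⟩
          | succ k' =>
            refine Or.inr ⟨hall 0 (Nat.succ_pos _), k', ?_, (f1 ψ₂ k').2 h2, ?_, ?_⟩
            · simp only [List.length_cons] at hk ⊢
              omega
            · rw [f2 k']
              exact hG
            · intro j hj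
              exact (f1 φ j).2 (hall (j + 1) (by omega))

end Aux5

/-! ## STATEMENT 0 -/

/-- For every MTL formula `φ` (in negation normal form, over a
finite alphabet), the constructed 1-ATA `A'_φ` recognizes exactly `L(φ)`. -/
theorem statement0 {A : Type*} [Fintype A] [DecidableEq A] (φ : MTL A) :
    MTL.Lang φ = OneATA.Lang (ataOf φ) := by
  ext w
  simp only [MTL.Lang, OneATA.Lang, Set.mem_setOf_eq]
  cases w with
  | nil =>
    constructor
    · intro h
      exact absurd h (holdsAt_nil φ 0)
    · intro h
      exact absurd h (not_accRun_nil φ _)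
  | cons x rest =>
    obtain ⟨d, a⟩ := x
    rw [show ((ataOf φ).init, some (0 : ℝ≥0)) = (MLoc.start, some (0 : ℝ≥0)) from rfl,
      start_step, key φ (rest.length + 1) rest (Nat.lt_succ_self _) φ (rzv φ) a,
      aholds_rzv, holdsAt_fst_irrel φ 0 d a rest 0]

end ATAPaper
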